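/- For every G ∈ ℝ^{3×3}, the limit lim_{t→0} dist(Id + tG, SO(3))/|t| exists and equals |sym G|, where sym G = (G + Gᵀ)/2 and dist is taken with respect to the Frobenius norm. -/

import Mathlib

open Matrix Filter

abbrev M3 := Matrix (Fin 3) (Fin 3) ℝ

noncomputable def frob (A : M3) : ℝ := Real.sqrt (∑ i, ∑ j, (A i j) ^ 2)

def SO3 (R : M3) : Prop := Rᵀ * R = 1 ∧ R.det = 1

noncomputable def distSO (F : M3) : ℝ := sInf ((fun R => frob (F - R)) '' {R | SO3 R})

noncomputable def symPart (F : M3) : M3 := (1 / 2 : ℝ) • (F + Fᵀ)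

attribute [local instance] Matrix.frobeniusSeminormedAddCommGroup
  Matrix.frobeniusNormedAddCommGroup Matrix.frobeniusNormedSpace
  Matrix.frobeniusNormedRing Matrix.frobeniusNormedAlgebra

lemma frob_eq_norm (A : M3) : frob A = ‖A‖ := by
  rw [Matrix.frobenius_norm_def, ← Real.sqrt_eq_rpow, frob]
  congr 1
  simp [Real.rpow_two, sq_abs, Real.norm_eq_abs]

lemma frob_nonneg (A : M3) : 0 ≤ frob A := Real.sqrt_nonneg _

lemma frob_smul (t : ℝ) (A : M3) : frob (t • A) = |t| * frob A := by
  simp [frob_eq_norm, norm_smul, Real.norm_eq_abs]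

lemma frob_add_le (A B : M3) : frob (A + B) ≤ frob A + frob B := by
  simp only [frob_eq_norm]; exact norm_add_le _ _

lemma frob_transpose (A : M3) : frob Aᵀ = frob A := by
  simp [frob_eq_norm]

lemma frob_mul_le (A B : M3) : frob (A * B) ≤ frob A * frob B := by
  simp only [frob_eq_norm]; exact norm_mul_le _ _

lemma frob_sym_le (G : M3) : frob (symPart G) ≤ frob G := by
  have := frob_add_le G Gᵀ
  rw [symPart, frob_smul]
  rw [frob_transpose] at this
  rw [abs_of_nonneg (by norm_num : (0:ℝ) ≤ 1/2)]
  nlinarith [frob_nonneg G]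

lemma SO3_one : SO3 1 := ⟨by simp, det_one⟩

lemma distSO_nonempty (F : M3) : ((fun R => frob (F - R)) '' {R | SO3 R}).Nonempty :=
  ⟨frob (F - 1), ⟨1, SO3_one, rfl⟩⟩

lemma distSO_bdd (F : M3) : BddBelow ((fun R => frob (F - R)) '' {R | SO3 R}) :=
  ⟨0, by rintro x ⟨R, -, rfl⟩; exact frob_nonneg _⟩

lemma distSO_le (F R : M3) (hR : SO3 R) : distSO F ≤ frob (F - R) :=
  csInf_le (distSO_bdd F) ⟨R, hR, rfl⟩

lemma le_distSO (F : M3) (c : ℝ) (h : ∀ R, SO3 R → c ≤ frob (F - R)) : c ≤ distSO F :=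
  le_csInf (distSO_nonempty F) (by rintro x ⟨R, hR, rfl⟩; exact h R hR)

-- inner product
noncomputable def ip (A B : M3) : ℝ := ∑ i, ∑ j, A i j * B i j

lemma ip_le (A B : M3) : ip A B ≤ frob A * frob B := by
  rw [ip, frob, frob]
  have h := Real.sum_mul_le_sqrt_mul_sqrt Finset.univ
    (fun p : Fin 3 × Fin 3 => A p.1 p.2) (fun p => B p.1 p.2)
  simpa [Fintype.sum_prod_type] using h

lemma abs_ip_le (A B : M3) : |ip A B| ≤ frob A * frob B := by
  rcases abs_cases (ip A B) with ⟨h, -⟩ | ⟨h, -⟩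
  · rw [h]; exact ip_le A B
  · rw [h]
    have := ip_le (-A) B
    simp only [ip, neg_apply, neg_mul, Finset.sum_neg_distrib] at this
    calc -ip A B = ip (-A) B := by simp [ip, neg_apply]
    _ ≤ frob (-A) * frob B := ip_le _ _
    _ = frob A * frob B := by rw [show (-A : M3) = (-1 : ℝ) • A by simp, frob_smul]; simp

lemma ip_skew_symm {X Y : M3} (hX : Xᵀ = -X) (hY : Yᵀ = Y) : ip X Y = 0 := by
  have h : ip X Y = -ip X Y := by
    calc ip X Y = ∑ i, ∑ j, X i j * Y i j := rfl
    _ = ∑ j, ∑ i, X i j * Y i j := by rw [Finset.sum_comm]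
    _ = ∑ i, ∑ j, X j i * Y j i := rfl
    _ = ∑ i, ∑ j, (Xᵀ i j) * (Yᵀ i j) := rfl
    _ = ∑ i, ∑ j, (-X i j) * (Y i j) := by rw [hX, hY]; rfl
    _ = -ip X Y := by simp [ip, Finset.sum_neg_distrib]
  linarith

lemma ip_sub_left (A B C : M3) : ip (A - B) C = ip A C - ip B C := by
  simp [ip, Matrix.sub_apply, sub_mul, Finset.sum_sub_distrib]

lemma ip_add_left (A B C : M3) : ip (A + B) C = ip A C + ip B C := by
  simp [ip, Matrix.add_apply, add_mul, Finset.sum_add_distrib]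

lemma ip_smul_left (t : ℝ) (A C : M3) : ip (t • A) C = t * ip A C := by
  simp [ip, Matrix.smul_apply, Finset.mul_sum, mul_assoc]

lemma ip_self (A : M3) : ip A A = frob A ^ 2 := by
  rw [frob, Real.sq_sqrt (by positivity)]
  simp [ip, sq]

lemma frob_neg (A : M3) : frob (-A) = frob A := by
  simp [frob_eq_norm]

lemma symPart_transpose (A : M3) : (symPart A)ᵀ = symPart A := by
  simp [symPart, transpose_add, transpose_smul, add_comm]

lemma skew_decomp (A : M3) : A = symPart A + (1/2 : ℝ) • (A - Aᵀ) := by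
  rw [symPart]; module

lemma ip_eq_sym_left (A C : M3) (hC : Cᵀ = C) : ip A C = ip (symPart A) C := by
  have h0 : ip ((1/2 : ℝ) • (A - Aᵀ)) C = 0 := by
    apply ip_skew_symm _ hC
    simp [transpose_smul, transpose_sub]
    module
  calc ip A C = ip (symPart A + (1/2 : ℝ) • (A - Aᵀ)) C := by rw [← skew_decomp]
  _ = ip (symPart A) C + 0 := by rw [ip_add_left, h0]
  _ = ip (symPart A) C := by ring

lemma lower_bound (G : M3) (t : ℝ) (R : M3) (hR : SO3 R) :
    |t| * frob (symPart G) - 2 * t^2 * (frob G)^2 ≤ frob (1 + t • G - R) := by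
  set s := frob (symPart G) with hs
  set g := frob G with hg
  have hs0 : 0 ≤ s := frob_nonneg _
  have hg0 : 0 ≤ g := frob_nonneg _
  have hX : (1 : M3) + t • G - R = t • G - (R - 1) := by abel
  by_cases hfar : 2 * (|t| * g) ≤ frob (1 - R)
  · -- far case
    have h1 : frob (1 - R) ≤ frob (1 + t • G - R) + |t| * g := by
      have : (1 : M3) - R = (1 + t • G - R) + (-(t • G)) := by abel
      rw [this]
      calc frob _ ≤ frob (1 + t • G - R) + frob (-(t • G)) := frob_add_le _ _
      _ = frob (1 + t • G - R) + |t| * g := by rw [frob_neg, frob_smul]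
    have h2 : s ≤ g := frob_sym_le G
    nlinarith [frob_nonneg (1 + t • G - R), sq_nonneg t, abs_nonneg t]
  · push_neg at hfar
    set A := R - 1 with hA
    have hAfr : frob A ≤ 2 * (|t| * g) := by
      have : frob A = frob (1 - R) := by
        rw [show (1 : M3) - R = -A by rw [hA]; abel, frob_neg]
      linarith
    -- symPart A = -(1/2) • (Aᵀ * A)
    have horth : Aᵀ + A = -(Aᵀ * A) := by
      have h := hR.1
      have hRA : R = 1 + A := by rw [hA]; abel
      rw [hRA] at h
      have h2 : (1 + A)ᵀ * (1 + A) = 1 + ((Aᵀ + A) + Aᵀ * A) := by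
        rw [transpose_add, transpose_one]
        noncomm_ring
      rw [h2] at h
      exact eq_neg_of_add_eq_zero_left (add_eq_left.mp h)
    have hsymA : symPart A = (-(1/2) : ℝ) • (Aᵀ * A) := by
      rw [symPart, show A + Aᵀ = Aᵀ + A from add_comm _ _, horth]
      module
    have hsymAfr : frob (symPart A) ≤ 2 * (t^2 * g^2) := by
      rw [hsymA, frob_smul]
      have h1 : frob (Aᵀ * A) ≤ frob A * frob A := by
        calc frob (Aᵀ * A) ≤ frob Aᵀ * frob A := frob_mul_le _ _
        _ = frob A * frob A := by rw [frob_transpose]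
      have h2 : |(-(1/2) : ℝ)| = 1/2 := by norm_num
      rw [h2]
      nlinarith [frob_nonneg A, abs_nonneg t, sq_abs t]
    -- inner products
    have hGsG : ip G (symPart G) = s ^ 2 := by
      rw [ip_eq_sym_left G _ (symPart_transpose G), ip_self]
    have hAsG : |ip A (symPart G)| ≤ 2 * (t^2 * g^2) * s := by
      rw [ip_eq_sym_left A _ (symPart_transpose G)]
      calc |ip (symPart A) (symPart G)| ≤ frob (symPart A) * s := abs_ip_le _ _
      _ ≤ 2 * (t^2 * g^2) * s := by nlinarith [frob_nonneg (symPart A)]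
    have hproj : |t| * s^2 - 2 * (t^2 * g^2) * s ≤ frob (1 + t • G - R) * s := by
      have h1 : ip (t • G - A) (symPart G) = t * s^2 - ip A (symPart G) := by
        rw [ip_sub_left, ip_smul_left, hGsG]
      have h2 : |ip (t • G - A) (symPart G)| ≤ frob (t • G - A) * s :=
        abs_ip_le _ _
      rw [hX]
      have h3 : |t| * s^2 - 2 * (t^2 * g^2) * s ≤ |t * s^2 - ip A (symPart G)| := by
        have := abs_sub_abs_le_abs_sub (t * s^2) (ip A (symPart G))
        have h4 : |t * s^2| = |t| * s^2 := by
          rw [abs_mul, abs_of_nonneg (sq_nonneg s)]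
        calc |t| * s^2 - 2 * (t^2 * g^2) * s ≤ |t * s^2| - |ip A (symPart G)| := by
              rw [h4]; linarith
        _ ≤ |t * s^2 - ip A (symPart G)| := abs_sub_abs_le_abs_sub _ _
      rw [h1] at h2
      linarith
    rcases eq_or_lt_of_le hs0 with hseq | hspos
    · have : |t| * s = 0 := by rw [← hseq]; ring
      nlinarith [frob_nonneg (1 + t • G - R), sq_nonneg t, sq_nonneg g]
    · nlinarith [frob_nonneg (1 + t • G - R)]

open NormedSpace in
lemma exp_skew_orth (W : M3) (hW : Wᵀ = -W) : (exp W)ᵀ * exp W = 1 := by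
  rw [← Matrix.exp_transpose, hW,
    ← Matrix.exp_add_of_commute (-W) W (Commute.refl W).neg_left, neg_add_cancel, exp_zero]

open NormedSpace in
lemma exp_skew_det (W : M3) (hW : Wᵀ = -W) (t : ℝ) : (exp (t • W)).det = 1 := by
  have hskew : ∀ s : ℝ, (s • W)ᵀ = -(s • W) := fun s => by
    rw [transpose_smul, hW, smul_neg]
  have hsq : ∀ s : ℝ, (exp (s • W)).det ^ 2 = 1 := by
    intro s
    have h := congrArg Matrix.det (exp_skew_orth _ (hskew s))
    rwa [det_mul, det_transpose, ← sq, det_one] at h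
  have hcont : Continuous fun s : ℝ => (exp (s • W)).det :=
    (exp_continuous.comp (continuous_id.smul continuous_const)).matrix_det
  by_contra hne
  have hneg : (exp (t • W)).det = -1 := by
    have h := hsq t
    set d := (exp (t • W)).det
    have : (d - 1) * (d + 1) = 0 := by nlinarith
    rcases mul_eq_zero.mp this with h' | h'
    · exact absurd (by linarith : d = 1) hne
    · linarith
  have h0 : (exp ((0:ℝ) • W)).det = 1 := by
    rw [zero_smul, exp_zero, det_one]
  have hIcc : (0:ℝ) ∈ Set.uIcc ((fun s : ℝ => (exp (s • W)).det) 0)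
      ((fun s : ℝ => (exp (s • W)).det) t) := by
    simp only [h0, hneg]
    exact Set.mem_uIcc.mpr (Or.inr ⟨by norm_num, by norm_num⟩)
  obtain ⟨s, -, hs⟩ := intermediate_value_uIcc hcont.continuousOn hIcc
  have h2 := hsq s
  simp only at hs
  rw [hs] at h2
  norm_num at h2

open NormedSpace in
lemma SO3_exp_skew (W : M3) (hW : Wᵀ = -W) (t : ℝ) : SO3 (exp (t • W)) :=
  ⟨exp_skew_orth _ (by rw [transpose_smul, hW, smul_neg]), exp_skew_det W hW t⟩

noncomputable def skw (G : M3) : M3 := (1 / 2 : ℝ) • (G - Gᵀ)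

lemma skw_transpose (G : M3) : (skw G)ᵀ = -skw G := by
  rw [skw, transpose_smul, transpose_sub, transpose_transpose]
  module

lemma sym_skw_decomp (G : M3) : G = symPart G + skw G := by
  rw [symPart, skw]; module

open NormedSpace in
lemma upper_bound (G : M3) (t : ℝ) :
    distSO (1 + t • G) ≤ |t| * frob (symPart G)
      + ‖exp (t • skw G) - 1 - t • skw G‖ := by
  have hSO := SO3_exp_skew (skw G) (skw_transpose G) t
  refine (distSO_le _ _ hSO).trans ?_
  have hdecomp : (1 : M3) + t • G - exp (t • skw G)
      = t • symPart G + (-(exp (t • skw G) - 1 - t • skw G)) := by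
    nth_rewrite 1 [sym_skw_decomp G]
    rw [smul_add]
    abel
  rw [hdecomp]
  calc frob _ ≤ frob (t • symPart G) + frob (-(exp (t • skw G) - 1 - t • skw G)) :=
        frob_add_le _ _
  _ = |t| * frob (symPart G) + ‖exp (t • skw G) - 1 - t • skw G‖ := by
      simp only [frob_eq_norm, norm_neg, norm_smul, Real.norm_eq_abs]

open NormedSpace in
lemma rem_tendsto (W : M3) :
    Tendsto (fun t : ℝ => ‖exp (t • W) - 1 - t • W‖ / |t|)
      (nhdsWithin 0 {(0 : ℝ)}ᶜ) (nhds 0) := by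
  have hd : HasDerivAt (fun u : ℝ => exp (u • W)) W 0 := by
    have h := hasDerivAt_exp_smul_const (𝕂 := ℝ) W (0 : ℝ)
    simp only [zero_smul, exp_zero, one_mul] at h
    exact h
  have ho : (fun t : ℝ => exp (t • W) - 1 - t • W) =o[nhds (0:ℝ)] fun t => t := by
    have h := hasDerivAt_iff_isLittleO.mp hd
    simpa [zero_smul, exp_zero] using h
  have h1 := (ho.norm_left.tendsto_div_nhds_zero).abs
  rw [abs_zero] at h1
  have h2 : (fun t : ℝ => |‖exp (t • W) - 1 - t • W‖ / t|)
      = fun t : ℝ => ‖exp (t • W) - 1 - t • W‖ / |t| := by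
    funext t
    rw [abs_div, abs_norm]
  rw [h2] at h1
  exact h1.mono_left nhdsWithin_le_nhds

/-- For every `G ∈ ℝ^{3×3}`,
`dist(Id + tG, SO(3))/|t| → |sym G|` as `t → 0`. -/
theorem dist_SO3_linearization (G : M3) :
    Tendsto (fun t : ℝ => distSO (1 + t • G) / |t|) (nhdsWithin 0 {(0 : ℝ)}ᶜ)
      (nhds (frob (symPart G))) := by
  set s := frob (symPart G) with hs
  set g := frob G with hg
  have hlow : ∀ᶠ t in nhdsWithin 0 {(0:ℝ)}ᶜ,
      s - 2 * |t| * g ^ 2 ≤ distSO (1 + t • G) / |t| := by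
    filter_upwards [self_mem_nhdsWithin] with t ht
    have ht0 : (0:ℝ) < |t| := abs_pos.mpr ht
    have hL : |t| * s - 2 * t ^ 2 * g ^ 2 ≤ distSO (1 + t • G) :=
      le_distSO _ _ (fun R hR => lower_bound G t R hR)
    rw [le_div_iff₀ ht0]
    calc (s - 2 * |t| * g ^ 2) * |t| = |t| * s - 2 * (|t| * |t|) * g ^ 2 := by ring
    _ = |t| * s - 2 * t ^ 2 * g ^ 2 := by rw [abs_mul_abs_self, ← sq]
    _ ≤ distSO (1 + t • G) := hL
  have hup : ∀ᶠ t in nhdsWithin 0 {(0:ℝ)}ᶜ,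
      distSO (1 + t • G) / |t|
        ≤ s + ‖NormedSpace.exp (t • skw G) - 1 - t • skw G‖ / |t| := by
    filter_upwards [self_mem_nhdsWithin] with t ht
    have ht0 : (0:ℝ) < |t| := abs_pos.mpr ht
    have h := upper_bound G t
    rw [div_le_iff₀ ht0, add_mul, div_mul_cancel₀ _ (ne_of_gt ht0)]
    linarith
  have hlim1 : Tendsto (fun t : ℝ => s - 2 * |t| * g ^ 2)
      (nhdsWithin 0 {(0:ℝ)}ᶜ) (nhds s) := by
    have hc : Continuous fun t : ℝ => s - 2 * |t| * g ^ 2 := by continuity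
    have h := hc.tendsto 0
    simp only [abs_zero, mul_zero, zero_mul, sub_zero] at h
    exact h.mono_left nhdsWithin_le_nhds
  have hlim2 : Tendsto
      (fun t : ℝ => s + ‖NormedSpace.exp (t • skw G) - 1 - t • skw G‖ / |t|)
      (nhdsWithin 0 {(0:ℝ)}ᶜ) (nhds s) := by
    have h := (tendsto_const_nhds (x := s) (f := nhdsWithin 0 {(0:ℝ)}ᶜ)).add
      (rem_tendsto (skw G))
    simpa using h
  exact tendsto_of_tendsto_of_tendsto_of_le_of_le' hlim1 hlim2 hlow hup
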